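/- arXiv:2005.02143 — 3 statements merged into one kernel-verified Lean document; each statement's English description precedes it below -/
import Mathlib

section
/- Let u = m·q for positive integers m and q, let x_1, …, x_s be distinct elements of Fin u, and let w_1, …, w_s be real weights with 0 ≤ w_i ≤ W for some W ≥ 1 and Σ_{i} w_i ≤ n. Let π be a permutation of Fin u drawn uniformly at random, and assign element x_i to bin ⌊π(x_i)/q⌋ ∈ Fin m. Then for every fixed bin β ∈ Fin m, the probability that Σ_{i : x_i is assigned to bin β} w_i ≥ 6n/m is at most 2^{−6n/(mW)}. -/
open scoped Classical

open Finset Nat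


lemma exp_le_one_add_mul {a : ℝ} (h0 : 0 ≤ a) (h1 : a ≤ 1) :
    Real.exp a ≤ 1 + (Real.exp 1 - 1) * a := by
  have h := convexOn_exp.2 (Set.mem_univ (0:ℝ)) (Set.mem_univ (1:ℝ))
      (by linarith : (0:ℝ) ≤ 1 - a) h0 (by ring)
  simp only [smul_eq_mul, mul_zero, mul_one, zero_add, Real.exp_zero] at h
  nlinarith [h]

section counting
variable {α : Type*} [Fintype α] [DecidableEq α]

lemma perm_constraint_step (B A : Finset α) (a₀ : α) (ha : a₀ ∉ A) :
    (Finset.univ.filter (fun π : Equiv.Perm α => ∀ a ∈ insert a₀ A, π a ∈ B)).card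
      * Fintype.card α
    ≤ (Finset.univ.filter (fun π : Equiv.Perm α => ∀ a ∈ A, π a ∈ B)).card * B.card := by
  classical
  set G := Finset.univ.filter (fun π : Equiv.Perm α => ∀ a ∈ A, π a ∈ B) with hG
  set S₁ := G.filter (fun π => π a₀ ∈ B) with hS₁
  set S₂ := G.filter (fun π => π a₀ ∉ B) with hS₂
  have hins : (Finset.univ.filter (fun π : Equiv.Perm α => ∀ a ∈ insert a₀ A, π a ∈ B)) = S₁ := by
    ext π
    simp only [hS₁, hG, Finset.mem_filter, Finset.mem_univ, true_and,
      Finset.forall_mem_insert]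
    tauto
  have hkey : S₁.card * Bᶜ.card ≤ S₂.card * B.card := by
    rw [← Finset.card_product, ← Finset.card_product]
    apply Finset.card_le_card_of_injOn (fun p => (Equiv.swap (p.1 a₀) p.2 * p.1, p.1 a₀))
    · rintro ⟨π, y⟩ hp
      simp only [Finset.mem_coe, Finset.mem_product, hS₁, hS₂, hG, Finset.mem_filter, Finset.mem_univ,
        true_and, Finset.mem_compl] at hp ⊢
      obtain ⟨⟨hπA, hπa₀⟩, hy⟩ := hp
      refine ⟨⟨?_, ?_⟩, hπa₀⟩
      · intro a haA
        have h1 : π a ≠ π a₀ := fun h => ha (by rwa [π.injective h] at haA)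
        have h2 : π a ≠ y := fun h => hy (h ▸ hπA a haA)
        simpa [Equiv.Perm.mul_apply, Equiv.swap_apply_of_ne_of_ne h1 h2] using hπA a haA
      · simpa [Equiv.Perm.mul_apply] using hy
    · rintro ⟨π, y⟩ _ ⟨ρ, z⟩ _ h
      simp only [Prod.mk.injEq] at h
      obtain ⟨h1, h2⟩ := h
      have hyz : y = z := by
        have := congrArg (fun σ : Equiv.Perm α => σ a₀) h1
        simpa [Equiv.Perm.mul_apply, h2, Equiv.swap_apply_left] using this
      subst hyz
      rw [h2] at h1
      have : π = ρ := mul_left_cancel h1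
      simp [this]
  have hpart : S₁.card + S₂.card = G.card :=
    Finset.card_filter_add_card_filter_not (s := G) (fun π : Equiv.Perm α => π a₀ ∈ B)
  have hcompl : B.card + Bᶜ.card = Fintype.card α := Finset.card_add_card_compl B
  rw [hins]
  calc S₁.card * Fintype.card α = S₁.card * B.card + S₁.card * Bᶜ.card := by
        rw [← hcompl]; ring
    _ ≤ S₁.card * B.card + S₂.card * B.card := Nat.add_le_add_left hkey _
    _ = (S₁.card + S₂.card) * B.card := by ring
    _ = G.card * B.card := by rw [hpart]

lemma perm_constraint_count (B A : Finset α) :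
    (Finset.univ.filter (fun π : Equiv.Perm α => ∀ a ∈ A, π a ∈ B)).card
      * (Fintype.card α) ^ A.card
    ≤ (Fintype.card α)! * B.card ^ A.card := by
  classical
  induction A using Finset.induction_on with
  | empty => simp [Fintype.card_perm]
  | @insert a₀ A ha ih =>
    rw [Finset.card_insert_of_notMem ha, pow_succ, pow_succ]
    calc (Finset.univ.filter (fun π : Equiv.Perm α => ∀ a ∈ insert a₀ A, π a ∈ B)).card
          * ((Fintype.card α) ^ A.card * Fintype.card α)
        = ((Finset.univ.filter (fun π : Equiv.Perm α => ∀ a ∈ insert a₀ A, π a ∈ B)).card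
          * Fintype.card α) * (Fintype.card α) ^ A.card := by ring
      _ ≤ ((Finset.univ.filter (fun π : Equiv.Perm α => ∀ a ∈ A, π a ∈ B)).card * B.card)
          * (Fintype.card α) ^ A.card :=
          Nat.mul_le_mul_right _ (perm_constraint_step B A a₀ ha)
      _ = ((Finset.univ.filter (fun π : Equiv.Perm α => ∀ a ∈ A, π a ∈ B)).card
          * (Fintype.card α) ^ A.card) * B.card := by ring
      _ ≤ ((Fintype.card α)! * B.card ^ A.card) * B.card := Nat.mul_le_mul_right _ ih
      _ = (Fintype.card α)! * (B.card ^ A.card * B.card) := by ring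

lemma perm_constraint_count_real (B A : Finset α) (hcard : 0 < Fintype.card α) :
    ((Finset.univ.filter (fun π : Equiv.Perm α => ∀ a ∈ A, π a ∈ B)).card : ℝ)
    ≤ (Fintype.card α)! * ((B.card : ℝ) / (Fintype.card α : ℝ)) ^ A.card := by
  rw [div_pow, ← mul_div_assoc, le_div_iff₀ (by positivity)]
  exact_mod_cast perm_constraint_count B A

end counting

/-- Let `u = m * q`, let `x₁, …, x_s` be distinct elements of `Fin u`, and let
`w₁, …, w_s` be real weights with `0 ≤ wᵢ ≤ W` for some `W ≥ 1` and `∑ᵢ wᵢ ≤ n`.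
For a uniformly random permutation `π` of `Fin u`, element `xᵢ` is assigned to bin
`⌊π xᵢ / q⌋ ∈ Fin m`.  Then for every fixed bin `β ∈ Fin m`, the probability that
`∑_{i : xᵢ assigned to β} wᵢ ≥ 6n/m` is at most `2 ^ (−6n/(mW))`. -/
theorem bin_weight_overflow_prob
    (u m q s : ℕ) (hm : 0 < m) (hq : 0 < q) (hu : u = m * q)
    (x : Fin s → Fin u) (hx : Function.Injective x)
    (w : Fin s → ℝ) (W n : ℝ) (hW : 1 ≤ W)
    (hw0 : ∀ i, 0 ≤ w i) (hwW : ∀ i, w i ≤ W)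
    (hsum : ∑ i, w i ≤ n)
    (β : Fin m) :
    ((Finset.univ.filter (fun π : Equiv.Perm (Fin u) =>
        6 * n / m ≤ ∑ i ∈ Finset.univ.filter
          (fun i : Fin s => (π (x i)).val / q = β.val), w i)).card : ℝ)
      / (Fintype.card (Equiv.Perm (Fin u)) : ℝ)
      ≤ (2 : ℝ) ^ (-(6 * n / (m * W))) := by
  classical
  have hu0 : 0 < u := by rw [hu]; exact Nat.mul_pos hm hq
  have hW0 : (0:ℝ) < W := lt_of_lt_of_le one_pos hW
  have hmR : (0:ℝ) < (m:ℝ) := by exact_mod_cast hm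
  have hn0 : (0:ℝ) ≤ n := le_trans (Finset.sum_nonneg fun i _ => hw0 i) hsum
  set t : ℝ := 6 * n / (m * W) with ht
  have ht0 : 0 ≤ t := by positivity
  set c : ℝ := Real.exp 1 - 1 with hc
  have hc0 : 0 ≤ c := by
    have h1 : (1:ℝ) + 1 ≤ Real.exp 1 := Real.add_one_le_exp 1
    simp only [hc]; linarith
  set N : ℕ := Fintype.card (Equiv.Perm (Fin u)) with hNdef
  have hN0 : (0:ℝ) < N := by
    have := Fintype.card_pos (α := Equiv.Perm (Fin u))
    exact_mod_cast this
  -- the bin as a subset of Fin u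
  set B : Finset (Fin u) := Finset.univ.filter (fun y => y.val / q = β.val) with hBdef
  have hBq : B.card ≤ q := by
    have := Finset.card_le_card_of_injOn (f := fun y : Fin u => (⟨y.val % q, Nat.mod_lt _ hq⟩ : Fin q))
      (s := B) (t := Finset.univ) (fun y _ => Finset.mem_univ _) ?_
    · simpa using this
    · intro y₁ h₁ y₂ h₂ hval
      simp only [hBdef, Finset.coe_filter, Set.mem_setOf_eq, Finset.mem_univ, true_and] at h₁ h₂
      have e1 : y₁.val % q = y₂.val % q := congrArg Fin.val hval
      have d1 := Nat.div_add_mod y₁.val q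
      have d2 := Nat.div_add_mod y₂.val q
      rw [h₁] at d1
      rw [h₂] at d2
      exact Fin.ext (by omega)
  have hfrac : ((B.card : ℝ) / (Fintype.card (Fin u) : ℝ)) ≤ 1 / m := by
    have hucast : ((u:ℕ):ℝ) = (m:ℝ) * (q:ℝ) := by exact_mod_cast congrArg (Nat.cast (R := ℝ)) hu
    have hu0R : (0:ℝ) < (u:ℝ) := by exact_mod_cast hu0
    rw [Fintype.card_fin]
    rw [div_le_div_iff₀ hu0R hmR]
    have hBR : (B.card : ℝ) ≤ (q:ℝ) := by exact_mod_cast hBq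
    nlinarith [hmR.le]
  -- counting bound
  have hcount : ∀ T : Finset (Fin s),
      ((Finset.univ.filter (fun π : Equiv.Perm (Fin u) =>
          ∀ i ∈ T, (π (x i)).val / q = β.val)).card : ℝ)
      ≤ N * (1/(m:ℝ)) ^ T.card := by
    intro T
    have h1 := perm_constraint_count_real (α := Fin u) B (T.image x)
      (by simpa [Fintype.card_fin] using hu0)
    have hle : (Finset.univ.filter (fun π : Equiv.Perm (Fin u) =>
            ∀ i ∈ T, (π (x i)).val / q = β.val)).card
        ≤ (Finset.univ.filter (fun π : Equiv.Perm (Fin u) => ∀ a ∈ T.image x, π a ∈ B)).card := by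
      apply Finset.card_le_card
      intro π hπ
      simp only [Finset.mem_filter, Finset.mem_univ, true_and] at hπ ⊢
      intro a ha
      obtain ⟨i, hi, rfl⟩ := Finset.mem_image.1 ha
      simp [hBdef, hπ i hi]
    have hcardim : (T.image x).card = T.card := Finset.card_image_of_injective T hx
    rw [hcardim] at h1
    have h1' : ((Finset.univ.filter (fun π : Equiv.Perm (Fin u) =>
            ∀ a ∈ T.image x, π a ∈ B)).card : ℝ)
        ≤ (Fintype.card (Fin u))! * ((B.card : ℝ) / (Fintype.card (Fin u) : ℝ)) ^ T.card := by
      convert h1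
    calc ((Finset.univ.filter (fun π : Equiv.Perm (Fin u) =>
          ∀ i ∈ T, (π (x i)).val / q = β.val)).card : ℝ)
        ≤ ((Finset.univ.filter (fun π : Equiv.Perm (Fin u) => ∀ a ∈ T.image x, π a ∈ B)).card : ℝ) := by
          exact_mod_cast hle
      _ ≤ (Fintype.card (Fin u))! * ((B.card : ℝ) / (Fintype.card (Fin u) : ℝ)) ^ T.card := h1'
      _ ≤ (Fintype.card (Fin u))! * (1/(m:ℝ)) ^ T.card := by
          gcongr
      _ = N * (1/(m:ℝ)) ^ T.card := by
          rw [hNdef, Fintype.card_perm]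
  -- pointwise exponential bound
  have key : ∀ π : Equiv.Perm (Fin u),
      Real.exp ((∑ i ∈ Finset.univ.filter
          (fun i : Fin s => (π (x i)).val / q = β.val), w i) / W)
      ≤ ∏ i : Fin s, (1 + c * (w i / W) *
          (if (π (x i)).val / q = β.val then (1:ℝ) else 0)) := by
    intro π
    have hsum1 : (∑ i ∈ Finset.univ.filter
          (fun i : Fin s => (π (x i)).val / q = β.val), w i) / W
        = ∑ i : Fin s, (w i / W) * (if (π (x i)).val / q = β.val then (1:ℝ) else 0) := by
      rw [Finset.sum_div, Finset.sum_filter]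
      congr 1
      ext i
      by_cases h : (π (x i)).val / q = β.val <;> simp [h]
    rw [hsum1, Real.exp_sum]
    apply Finset.prod_le_prod (fun i _ => (Real.exp_pos _).le)
    intro i _
    by_cases hcond : (π (x i)).val / q = β.val
    · simp only [hcond, if_pos, mul_one]
      simpa using exp_le_one_add_mul (div_nonneg (hw0 i) hW0.le)
        ((div_le_one hW0).2 (hwW i))
    · simp [hcond]
  -- expansion of the product over subsets
  have expand : ∀ π : Equiv.Perm (Fin u),
      (∏ i : Fin s, (1 + c * (w i / W) *
          (if (π (x i)).val / q = β.val then (1:ℝ) else 0)))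
      = ∑ T ∈ (Finset.univ : Finset (Fin s)).powerset, (∏ i ∈ T, (c * (w i / W))) *
          (if (∀ i ∈ T, (π (x i)).val / q = β.val) then (1:ℝ) else 0) := by
    intro π
    calc (∏ i : Fin s, (1 + c * (w i / W) *
            (if (π (x i)).val / q = β.val then (1:ℝ) else 0)))
        = ∏ i : Fin s, ((c * (w i / W) *
            (if (π (x i)).val / q = β.val then (1:ℝ) else 0)) + 1) := by
          apply Finset.prod_congr rfl; intro i _; ring
      _ = ∑ T ∈ (Finset.univ : Finset (Fin s)).powerset, ∏ i ∈ T, (c * (w i / W) *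
            (if (π (x i)).val / q = β.val then (1:ℝ) else 0)) := by
          rw [Finset.prod_add]; simp
      _ = ∑ T ∈ (Finset.univ : Finset (Fin s)).powerset, (∏ i ∈ T, (c * (w i / W))) *
          (if (∀ i ∈ T, (π (x i)).val / q = β.val) then (1:ℝ) else 0) := by
          apply Finset.sum_congr rfl
          intro T _
          rw [Finset.prod_mul_distrib, Finset.prod_boole]
          congr
  -- swap the two sums
  have swap : (∑ π : Equiv.Perm (Fin u), ∏ i : Fin s, (1 + c * (w i / W) *
          (if (π (x i)).val / q = β.val then (1:ℝ) else 0)))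
      = ∑ T ∈ (Finset.univ : Finset (Fin s)).powerset, (∏ i ∈ T, (c * (w i / W))) *
          ((Finset.univ.filter (fun π : Equiv.Perm (Fin u) =>
            ∀ i ∈ T, (π (x i)).val / q = β.val)).card : ℝ) := by
    rw [Finset.sum_congr rfl (fun π _ => expand π), Finset.sum_comm]
    apply Finset.sum_congr rfl
    intro T _
    rw [← Finset.mul_sum]
    congr 1
    rw [Finset.sum_boole]
  -- bound the subset sum
  have step3 : (∑ T ∈ (Finset.univ : Finset (Fin s)).powerset, (∏ i ∈ T, (c * (w i / W))) *
          ((Finset.univ.filter (fun π : Equiv.Perm (Fin u) =>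
            ∀ i ∈ T, (π (x i)).val / q = β.val)).card : ℝ))
      ≤ N * Real.exp (c * t / 6) := by
    have hsum2 : (∑ i : Fin s, c * (w i / W) * (1/(m:ℝ))) ≤ c * t / 6 := by
      have e1 : (∑ i : Fin s, c * (w i / W) * (1/(m:ℝ))) = (c/(W*m)) * ∑ i, w i := by
        rw [Finset.mul_sum]
        apply Finset.sum_congr rfl
        intro i _
        field_simp
      rw [e1, ht]
      calc (c/(W*m)) * ∑ i, w i ≤ (c/(W*m)) * n :=
            mul_le_mul_of_nonneg_left hsum (div_nonneg hc0 (by positivity))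
        _ = c * (6 * n / ((m:ℝ) * W)) / 6 := by field_simp
    calc (∑ T ∈ (Finset.univ : Finset (Fin s)).powerset, (∏ i ∈ T, (c * (w i / W))) *
            ((Finset.univ.filter (fun π : Equiv.Perm (Fin u) =>
              ∀ i ∈ T, (π (x i)).val / q = β.val)).card : ℝ))
        ≤ ∑ T ∈ (Finset.univ : Finset (Fin s)).powerset, (∏ i ∈ T, (c * (w i / W))) *
            ((N:ℝ) * (1/(m:ℝ)) ^ T.card) := by
          apply Finset.sum_le_sum
          intro T _
          exact mul_le_mul_of_nonneg_left (hcount T)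
            (Finset.prod_nonneg fun i _ =>
              mul_nonneg hc0 (div_nonneg (hw0 i) hW0.le))
      _ = N * ∑ T ∈ (Finset.univ : Finset (Fin s)).powerset,
            ∏ i ∈ T, (c * (w i / W) * (1/(m:ℝ))) := by
          rw [Finset.mul_sum]
          apply Finset.sum_congr rfl
          intro T _
          simp only [Finset.prod_mul_distrib, Finset.prod_const]
          ring
      _ = N * ∏ i : Fin s, (c * (w i / W) * (1/(m:ℝ)) + 1) := by
          congr 1
          rw [Finset.prod_add]
          simp
      _ ≤ N * ∏ i : Fin s, Real.exp (c * (w i / W) * (1/(m:ℝ))) := by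
          apply mul_le_mul_of_nonneg_left _ hN0.le
          apply Finset.prod_le_prod
          · intro i _
            have h1 : (0:ℝ) ≤ c * (w i / W) * (1/(m:ℝ)) :=
              mul_nonneg (mul_nonneg hc0 (div_nonneg (hw0 i) hW0.le)) (by positivity)
            linarith
          · intro i _
            linarith [Real.add_one_le_exp (c * (w i / W) * (1/(m:ℝ)))]
      _ = N * Real.exp (∑ i : Fin s, c * (w i / W) * (1/(m:ℝ))) := by
          rw [← Real.exp_sum]
      _ ≤ N * Real.exp (c * t / 6) :=
          mul_le_mul_of_nonneg_left (Real.exp_le_exp.2 hsum2) hN0.le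
  -- the numeric inequality
  have hnum : Real.exp (c * t / 6 - t) ≤ (2:ℝ) ^ (-t) := by
    rw [Real.rpow_def_of_pos (by norm_num : (0:ℝ) < 2)]
    apply Real.exp_le_exp.2
    have hlog : Real.log 2 < 0.6931471808 := Real.log_two_lt_d9
    have hexp : Real.exp 1 < 2.7182818286 := Real.exp_one_lt_d9
    have hc6 : c / 6 + Real.log 2 ≤ 1 := by
      have hl0 : 0 < Real.log 2 := Real.log_pos (by norm_num)
      simp only [hc]; linarith
    nlinarith [mul_nonneg ht0 (by linarith : (0:ℝ) ≤ 1 - c/6 - Real.log 2)]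
  -- assemble everything
  rw [div_le_iff₀ hN0]
  calc ((Finset.univ.filter (fun π : Equiv.Perm (Fin u) =>
        6 * n / m ≤ ∑ i ∈ Finset.univ.filter
          (fun i : Fin s => (π (x i)).val / q = β.val), w i)).card : ℝ)
      = ∑ π ∈ Finset.univ.filter (fun π : Equiv.Perm (Fin u) =>
        6 * n / m ≤ ∑ i ∈ Finset.univ.filter
          (fun i : Fin s => (π (x i)).val / q = β.val), w i), (1:ℝ) := by simp
    _ ≤ ∑ π ∈ Finset.univ.filter (fun π : Equiv.Perm (Fin u) =>
        6 * n / m ≤ ∑ i ∈ Finset.univ.filter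
          (fun i : Fin s => (π (x i)).val / q = β.val), w i),
          Real.exp ((∑ i ∈ Finset.univ.filter
            (fun i : Fin s => (π (x i)).val / q = β.val), w i) / W - t) := by
        apply Finset.sum_le_sum
        intro π hπ
        rw [Finset.mem_filter] at hπ
        apply Real.one_le_exp
        have h1 : t ≤ (∑ i ∈ Finset.univ.filter
            (fun i : Fin s => (π (x i)).val / q = β.val), w i) / W := by
          rw [ht, ← div_div]
          exact (div_le_div_iff_of_pos_right hW0).2 hπ.2
        linarith
    _ ≤ ∑ π : Equiv.Perm (Fin u),
          Real.exp ((∑ i ∈ Finset.univ.filter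
            (fun i : Fin s => (π (x i)).val / q = β.val), w i) / W - t) :=
        Finset.sum_le_sum_of_subset_of_nonneg (Finset.filter_subset _ _)
          (fun _ _ _ => (Real.exp_pos _).le)
    _ = Real.exp (-t) * ∑ π : Equiv.Perm (Fin u),
          Real.exp ((∑ i ∈ Finset.univ.filter
            (fun i : Fin s => (π (x i)).val / q = β.val), w i) / W) := by
        rw [Finset.mul_sum]
        apply Finset.sum_congr rfl
        intro π _
        rw [← Real.exp_add]
        congr 1
        ring
    _ ≤ Real.exp (-t) * ∑ π : Equiv.Perm (Fin u),
          ∏ i : Fin s, (1 + c * (w i / W) *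
            (if (π (x i)).val / q = β.val then (1:ℝ) else 0)) :=
        mul_le_mul_of_nonneg_left (Finset.sum_le_sum fun π _ => key π) (Real.exp_pos _).le
    _ = Real.exp (-t) * ∑ T ∈ (Finset.univ : Finset (Fin s)).powerset,
          (∏ i ∈ T, (c * (w i / W))) *
          ((Finset.univ.filter (fun π : Equiv.Perm (Fin u) =>
            ∀ i ∈ T, (π (x i)).val / q = β.val)).card : ℝ) := by rw [swap]
    _ ≤ Real.exp (-t) * (N * Real.exp (c * t / 6)) :=
        mul_le_mul_of_nonneg_left step3 (Real.exp_pos _).le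
    _ = N * Real.exp (c * t / 6 - t) := by
        rw [Real.exp_sub, Real.exp_neg, div_eq_mul_inv]
        ring
    _ ≤ N * (2:ℝ) ^ (-t) := mul_le_mul_of_nonneg_left hnum hN0.le
    _ = (2:ℝ) ^ (-t) * N := mul_comm _ _
end

section
/- There exists n₀ such that the following holds for all n ≥ n₀. Let u = m·q for positive integers m, q with m ≥ n/log₂ n, let x_1, …, x_s be distinct elements of Fin u with s ≤ n, and let π be a permutation of Fin u drawn uniformly at random, assigning element x_i to bin ⌊π(x_i)/q⌋ ∈ Fin m. Then with probability at least 1 − 1/n, every bin β ∈ Fin m is assigned at most (log₂ n)² of the elements x_1, …, x_s. -/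
open scoped Classical
open Finset Equiv


lemma fact_lb (k : ℕ) : ((k : ℝ) / 3) ^ k ≤ k.factorial := by
  induction k with
  | zero => simp
  | succ k ih =>
    rcases Nat.eq_zero_or_pos k with rfl | hk
    · norm_num
    have hk' : (0:ℝ) < k := by exact_mod_cast hk
    have he : ((k:ℝ)+1)^k ≤ 3 * (k:ℝ)^k := by
      have h1 : ((k:ℝ)+1)/k ≤ Real.exp (1/k) := by
        have := Real.add_one_le_exp (1/(k:ℝ))
        calc ((k:ℝ)+1)/k = 1/(k:ℝ) + 1 := by field_simp; ring
        _ = 1/(k:ℝ) + 1 := by ring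
        _ ≤ Real.exp (1/k) := this
      have h2 : (((k:ℝ)+1)/k)^k ≤ Real.exp (1/(k:ℝ)) ^ k :=
        pow_le_pow_left₀ (by positivity) h1 k
      rw [← Real.exp_nat_mul] at h2
      have h3 : Real.exp ((k:ℕ) * (1/(k:ℝ))) = Real.exp 1 := by
        congr 1; field_simp
      rw [h3] at h2
      have h4 : Real.exp 1 ≤ 3 := by
        have := Real.exp_one_lt_d9; linarith
      have h5 : (((k:ℝ)+1)/k)^k = ((k:ℝ)+1)^k / (k:ℝ)^k := div_pow _ _ _
      rw [h5] at h2
      have : ((k:ℝ)+1)^k ≤ Real.exp 1 * (k:ℝ)^k := by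
        rw [div_le_iff₀ (by positivity)] at h2; linarith [h2]
      calc ((k:ℝ)+1)^k ≤ Real.exp 1 * (k:ℝ)^k := this
      _ ≤ 3 * (k:ℝ)^k := by nlinarith [pow_pos hk' k]
    have : ((↑(k+1):ℝ)/3)^(k+1) = ((k:ℝ)+1)/3 * (((k:ℝ)+1)^k / 3^k) := by
      push_cast; rw [pow_succ, div_pow]; ring
    rw [this]
    have h6 : ((k:ℝ)+1)^k / 3^k ≤ 3 * ((k:ℝ)/3)^k := by
      rw [div_pow]
      rw [div_le_iff₀ (by positivity)]
      calc ((k:ℝ)+1)^k ≤ 3*(k:ℝ)^k := he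
      _ = 3 * ((k:ℝ)^k/3^k) * 3^k := by field_simp
    calc ((k:ℝ)+1)/3 * (((k:ℝ)+1)^k / 3^k) ≤ ((k:ℝ)+1)/3 * (3 * ((k:ℝ)/3)^k) := by
          apply mul_le_mul_of_nonneg_left h6 (by positivity)
    _ = ((k:ℝ)+1) * ((k:ℝ)/3)^k := by ring
    _ ≤ ((k:ℝ)+1) * k.factorial := by
          apply mul_le_mul_of_nonneg_left ih (by positivity)
    _ = (k+1).factorial := by rw [Nat.factorial_succ]; push_cast; ring


lemma card_fix (u : ℕ) (A : Finset (Fin u)) :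
    (univ.filter fun π : Perm (Fin u) => ∀ a ∈ A, π a = a).card = (u - A.card).factorial := by
  have e1 : Perm {x : Fin u // x ∉ A} ≃ {π : Perm (Fin u) // ∀ a, ¬ (a ∉ A) → π a = a} :=
    Equiv.Perm.subtypeEquivSubtypePerm (fun x => x ∉ A)
  have e2 : {π : Perm (Fin u) // ∀ a, ¬ (a ∉ A) → π a = a} ≃
      {π : Perm (Fin u) // ∀ a ∈ A, π a = a} := by
    apply Equiv.subtypeEquivRight
    intro π
    constructor
    · intro h a ha; exact h a (by simpa using ha)
    · intro h a ha; exact h a (by simpa using ha)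
  have h1 : (univ.filter fun π : Perm (Fin u) => ∀ a ∈ A, π a = a).card
      = Fintype.card {π : Perm (Fin u) // ∀ a ∈ A, π a = a} := (Fintype.card_subtype _).symm
  rw [h1, ← Fintype.card_congr (e1.trans e2), Fintype.card_perm, Fintype.card_subtype_compl,
    Fintype.card_fin, Fintype.card_coe]

lemma card_ext (u : ℕ) (A : Finset (Fin u)) (σ : Perm (Fin u)) :
    (univ.filter fun π : Perm (Fin u) => ∀ a ∈ A, π a = σ a).card = (u - A.card).factorial := by
  rw [← card_fix u A]
  apply Finset.card_nbij' (i := fun π => σ⁻¹ * π) (j := fun π => σ * π)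
  · intro π hπ; simp only [Finset.mem_coe, mem_filter, mem_univ, true_and] at *
    intro a ha; simp [Perm.mul_apply, hπ a ha]
  · intro π hπ; simp only [Finset.mem_coe, mem_filter, mem_univ, true_and] at *
    intro a ha; simp [Perm.mul_apply, hπ a ha]
  · intro π _; simp only [← mul_assoc, mul_inv_cancel, inv_mul_cancel, one_mul]
  · intro π _; simp only [← mul_assoc, mul_inv_cancel, inv_mul_cancel, one_mul]

lemma card_mapsTo (u : ℕ) (A B : Finset (Fin u)) :
    (univ.filter fun π : Perm (Fin u) => ∀ a ∈ A, π a ∈ B).card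
      ≤ B.card ^ A.card * (u - A.card).factorial := by
  classical
  set s := univ.filter fun π : Perm (Fin u) => ∀ a ∈ A, π a ∈ B with hs
  set f : Perm (Fin u) → ({x : Fin u // x ∈ A} → Fin u) := fun π a => π a.1 with hf
  have key : s.card ≤ (u - A.card).factorial * (s.image f).card := by
    apply Finset.card_le_mul_card_image
    intro g hg
    obtain ⟨σ, hσ, hσg⟩ := Finset.mem_image.1 hg
    calc (s.filter fun π => f π = g).card
        ≤ (univ.filter fun π : Perm (Fin u) => ∀ a ∈ A, π a = σ a).card := by
          apply Finset.card_le_card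
          intro π hπ
          simp only [mem_filter, mem_univ, true_and] at *
          intro a ha
          have := congrFun (hπ.2.trans hσg.symm) ⟨a, ha⟩
          exact this
      _ = (u - A.card).factorial := card_ext u A σ
  have himg : (s.image f).card ≤ B.card ^ A.card := by
    have : s.image f ⊆ univ.filter (fun g : {x : Fin u // x ∈ A} → Fin u => ∀ a, g a ∈ B) := by
      intro g hg
      obtain ⟨σ, hσ, rfl⟩ := Finset.mem_image.1 hg
      rw [hs] at hσ
      simp only [mem_filter, mem_univ, true_and] at hσ ⊢
      intro a; exact hσ a.1 a.2
    apply le_trans (Finset.card_le_card this)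
    have : (univ.filter (fun g : {x : Fin u // x ∈ A} → Fin u => ∀ a, g a ∈ B)).card
        ≤ Fintype.card ({x : Fin u // x ∈ A} → {y : Fin u // y ∈ B}) := by
      rw [← Fintype.card_subtype]
      exact Fintype.card_le_of_injective
        (fun g a => (⟨g.1 a, g.2 a⟩ : {y : Fin u // y ∈ B}))
        (by intro g g' h; apply Subtype.ext; funext a
            simpa using congrArg Subtype.val (congrFun h a))
    apply le_trans this
    rw [Fintype.card_fun, Fintype.card_coe, Fintype.card_coe]
  calc s.card ≤ (u - A.card).factorial * (s.image f).card := key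
    _ ≤ (u - A.card).factorial * (B.card ^ A.card) := Nat.mul_le_mul_left _ himg
    _ = B.card ^ A.card * (u - A.card).factorial := Nat.mul_comm _ _

lemma card_bin (m q : ℕ) (hq : 0 < q) (β : Fin m) :
    (univ.filter fun y : Fin (m * q) => y.val / q = β.val).card = q := by
  have hβ : ∀ j : Fin q, q * β.val + j.val < m * q := by
    intro j
    calc q * β.val + j.val < q * β.val + q := by omega
      _ = q * (β.val + 1) := by ring
      _ ≤ q * m := Nat.mul_le_mul_left q β.2
      _ = m * q := Nat.mul_comm _ _
  set f : Fin q → Fin (m * q) := fun j => ⟨q * β.val + j.val, hβ j⟩ with hf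
  have : (univ.filter fun y : Fin (m * q) => y.val / q = β.val) = univ.image f := by
    ext y
    simp only [mem_filter, mem_univ, true_and, mem_image]
    constructor
    · intro h
      refine ⟨⟨y.val % q, Nat.mod_lt _ hq⟩, ?_⟩
      apply Fin.ext
      simp [hf, ← h, Nat.div_add_mod]
    · rintro ⟨j, rfl⟩
      simp [hf, Nat.mul_add_div hq, Nat.div_eq_of_lt j.2]
  rw [this, Finset.card_image_of_injective _ ?_, Finset.card_univ, Fintype.card_fin]
  intro a b hab
  have := congrArg Fin.val hab
  simp only [hf] at this
  exact Fin.ext (by omega)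

lemma per_bin (u m q s k : ℕ) (hq : 0 < q) (hu : u = m * q)
    (x : Fin s → Fin u) (hx : Function.Injective x) (β : Fin m) :
    (univ.filter fun π : Perm (Fin u) =>
        k ≤ (univ.filter fun i : Fin s => (π (x i)).val / q = β.val).card).card
      ≤ s.choose k * (q ^ k * (u - k).factorial) := by
  classical
  set B : Finset (Fin u) := univ.filter fun y : Fin u => y.val / q = β.val with hB
  have hBcard : B.card = q := by subst hu; exact card_bin m q hq β
  have hsub : (univ.filter fun π : Perm (Fin u) =>
        k ≤ (univ.filter fun i : Fin s => (π (x i)).val / q = β.val).card)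
      ⊆ (Finset.powersetCard k (univ : Finset (Fin s))).biUnion
          (fun T => univ.filter fun π : Perm (Fin u) => ∀ a ∈ T.image x, π a ∈ B) := by
    intro π hπ
    simp only [mem_filter, mem_univ, true_and] at hπ
    obtain ⟨T, hT, hTcard⟩ := Finset.exists_subset_card_eq hπ
    simp only [Finset.mem_biUnion]
    refine ⟨T, Finset.mem_powersetCard.2 ⟨Finset.subset_univ _, hTcard⟩, ?_⟩
    simp only [mem_filter, mem_univ, true_and]
    intro a ha
    rw [Finset.mem_image] at ha
    obtain ⟨i, hi, rfl⟩ := ha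
    have := hT hi
    simp only [mem_filter, mem_univ, true_and] at this
    simp [hB, this]
  calc _ ≤ _ := Finset.card_le_card hsub
    _ ≤ ∑ T ∈ Finset.powersetCard k (univ : Finset (Fin s)),
        (univ.filter fun π : Perm (Fin u) => ∀ a ∈ T.image x, π a ∈ B).card :=
      Finset.card_biUnion_le
    _ ≤ ∑ T ∈ Finset.powersetCard k (univ : Finset (Fin s)), q ^ k * (u - k).factorial := by
      apply Finset.sum_le_sum
      intro T hT
      have hTcard : T.card = k := (Finset.mem_powersetCard.1 hT).2
      have himg : (T.image x).card = k := by
        rw [Finset.card_image_of_injective _ hx, hTcard]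
      calc _ ≤ B.card ^ (T.image x).card * (u - (T.image x).card).factorial :=
            card_mapsTo u (T.image x) B
        _ = q ^ k * (u - k).factorial := by rw [himg, hBcard]
    _ = s.choose k * (q ^ k * (u - k).factorial) := by
      rw [Finset.sum_const, Finset.card_powersetCard, Finset.card_univ, Fintype.card_fin,
        smul_eq_mul]

lemma step7_aux (n k : ℕ) (L : ℝ) (hn0 : (0:ℝ) < n) (hL0 : (8192:ℝ) ≤ L)
    (hLpos : (0:ℝ) < L) (hnL : (2:ℝ) ^ L = n) (hk1 : L^2 < (k:ℝ)) :
    (n:ℝ) * (1/2)^k ≤ 1/n := by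
  rw [div_pow, one_pow]
  rw [mul_one_div, div_le_div_iff₀ (by positivity) hn0]
  have h2k : (n:ℝ) * n ≤ (2:ℝ)^(k:ℕ) := by
    have e3 : (n:ℝ) * n = (2:ℝ) ^ (2*L) := by
      rw [← hnL, ← Real.rpow_add (by norm_num)]; congr 1; ring
    have e4 : ((2:ℝ)^(k:ℕ)) = (2:ℝ) ^ ((k:ℕ):ℝ) := by
      rw [Real.rpow_natCast]
    rw [e3, e4]
    apply Real.rpow_le_rpow_of_exponent_le (by norm_num)
    have hposL : (0:ℝ) < L * (L - 2) := mul_pos hLpos (by linarith)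
    nlinarith [hposL]
  linarith

lemma numeric (n u m q s k : ℕ) (L : ℝ) (hL : L = Real.logb 2 n)
    (hn : (2:ℝ)^(8192:ℕ) ≤ (n:ℝ)) (hm : (n:ℝ)/L ≤ m) (hq : 0 < q) (hu : u = m*q)
    (hs : s ≤ n) (hk1 : L^2 < (k:ℝ)) (hk2 : (k:ℝ) ≤ L^2 + 1) :
    ((m:ℝ) * ((s.choose k : ℝ) * ((q:ℝ)^k * ((u-k).factorial : ℝ)))) / (u.factorial : ℝ)
      ≤ 1/n := by
  have hn1 : (1:ℝ) ≤ n := le_trans (one_le_pow₀ (by norm_num)) hn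
  have hn0 : (0:ℝ) < n := lt_of_lt_of_le one_pos hn1
  have hL0 : (8192:ℝ) ≤ L := by
    rw [hL]
    calc (8192:ℝ) = Real.logb 2 ((2:ℝ)^(8192:ℕ)) := by
          rw [Real.logb_pow, Real.logb_self_eq_one (by norm_num : (1:ℝ) < 2)]; norm_num
      _ ≤ Real.logb 2 n := Real.logb_le_logb_of_le (by norm_num) (by positivity) hn
  have hLpos : (0:ℝ) < L := by linarith
  clear hn
  have hnL : (2:ℝ) ^ L = n := by rw [hL]; exact Real.rpow_logb (by norm_num) (by norm_num) hn0
  -- n ≥ (L/6)^4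
  have hnL4 : (L/6)^4 ≤ (n:ℝ) := by
    have h1 : (2:ℝ) ^ L = Real.exp (Real.log 2 * L) := by
      rw [Real.rpow_def_of_pos (by norm_num)]
    have h2 : Real.exp (Real.log 2 * L) = Real.exp (Real.log 2 * L / 4) ^ (4:ℕ) := by
      rw [← Real.exp_nat_mul]; congr 1; ring
    have h3 : L / 6 ≤ Real.exp (Real.log 2 * L / 4) := by
      have hlog : (2:ℝ)/3 ≤ Real.log 2 := by
        have := Real.log_two_gt_d9; linarith
      have := Real.add_one_le_exp (Real.log 2 * L / 4)
      nlinarith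
    calc (L/6)^4 ≤ Real.exp (Real.log 2 * L / 4) ^ (4:ℕ) := by
          apply pow_le_pow_left₀ (by positivity) h3
      _ = (n:ℝ) := by rw [← h2, ← h1, hnL]
  have h4L3 : 4 * L^3 ≤ (n:ℝ) := by nlinarith
  have hmpos : (0:ℝ) < m := lt_of_lt_of_le (by positivity) hm
  have hq1 : (1:ℝ) ≤ q := by exact_mod_cast hq
  have hum : (m:ℝ) ≤ u := by
    rw [hu]; push_cast; nlinarith
  have hku : 2 * (k:ℝ) ≤ u := by
    have : 2 * (k:ℝ) ≤ 2*L^2 + 2 := by linarith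
    have h2 : 2*L^2 + 2 ≤ (n:ℝ)/L := by
      rw [le_div_iff₀ hLpos]; nlinarith
    linarith [hm.trans hum]
  have hkpos : (0:ℝ) < k := by nlinarith
  have hkn : k ≤ u := by
    have : (k:ℝ) ≤ u := by linarith
    exact_mod_cast this
  have hupos : (0:ℝ) < u := by linarith
  -- u ! = u.descFactorial k * (u-k)!
  have hfact : (u.factorial : ℝ) = (u.descFactorial k : ℝ) * ((u-k).factorial : ℝ) := by
    rw [← Nat.cast_mul]
    congr 1
    rw [Nat.descFactorial_eq_factorial_mul_choose]
    rw [← Nat.choose_mul_factorial_mul_factorial hkn]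
    ring
  -- descFactorial lower bound
  have hdF : ((u:ℝ)/2)^k ≤ (u.descFactorial k : ℝ) := by
    calc ((u:ℝ)/2)^k ≤ ((u + 1 - k : ℕ) : ℝ)^k := by
          apply pow_le_pow_left₀ (by positivity)
          rw [Nat.cast_sub (by omega)]
          push_cast; linarith
      _ ≤ (u.descFactorial k : ℝ) := by
          exact_mod_cast Nat.pow_sub_le_descFactorial u k
  -- choose bound
  have hchoose : (s.choose k : ℝ) ≤ (n:ℝ)^k / (k.factorial : ℝ) := by
    rw [le_div_iff₀ (by positivity)]
    calc (s.choose k : ℝ) * (k.factorial : ℝ) = (k.factorial * s.choose k : ℕ) := by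
          push_cast; ring
      _ = ((s.descFactorial k : ℕ) : ℝ) := by rw [← Nat.descFactorial_eq_factorial_mul_choose]
      _ ≤ ((s^k : ℕ) : ℝ) := by exact_mod_cast Nat.descFactorial_le_pow s k
      _ ≤ (n:ℝ)^k := by push_cast; exact pow_le_pow_left₀ (by positivity) (by exact_mod_cast hs) k
  -- factorial lower bound
  have hfactlb : (L^2/3)^k ≤ (k.factorial : ℝ) := by
    calc (L^2/3)^k ≤ ((k:ℝ)/3)^k := by
          apply pow_le_pow_left₀ (by positivity); linarith
      _ ≤ (k.factorial : ℝ) := fact_lb k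
  -- main chain
  have hdFpos : (0:ℝ) < (u.descFactorial k : ℝ) := lt_of_lt_of_le (by positivity) hdF
  have key : ((m:ℝ) * ((s.choose k : ℝ) * ((q:ℝ)^k * ((u-k).factorial : ℝ)))) / (u.factorial : ℝ)
      = (m:ℝ) * (s.choose k : ℝ) * (q:ℝ)^k / (u.descFactorial k : ℝ) := by
    have h1 : ((u-k).factorial : ℝ) ≠ 0 := by positivity
    rw [hfact]
    rw [div_eq_div_iff (by positivity) (ne_of_gt hdFpos)]
    ring
  rw [key]
  have step1 : (m:ℝ) * (s.choose k : ℝ) * (q:ℝ)^k / (u.descFactorial k : ℝ)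
      ≤ (m:ℝ) * ((n:ℝ)^k / (k.factorial : ℝ)) * (q:ℝ)^k / ((u:ℝ)/2)^k := by
    gcongr
  -- (q/(u/2))^k = (2/m)^k
  have hqu : (q:ℝ)^k / ((u:ℝ)/2)^k = (2/(m:ℝ))^k := by
    rw [← div_pow]
    congr 1
    have hm0 : (m:ℝ) ≠ 0 := ne_of_gt hmpos
    have hq0 : (q:ℝ) ≠ 0 := by positivity
    rw [hu]; push_cast
    field_simp
  have step2 : (m:ℝ) * ((n:ℝ)^k / (k.factorial : ℝ)) * (q:ℝ)^k / ((u:ℝ)/2)^k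
      = (m:ℝ) * ((n:ℝ)^k / (k.factorial : ℝ)) * (2/(m:ℝ))^k := by
    rw [← hqu]; ring
  -- handle m powers: k = (k-1)+1
  have hkpos' : 0 < k := by exact_mod_cast hkpos
  obtain ⟨k', rfl⟩ : ∃ k', k = k' + 1 := ⟨k - 1, by omega⟩
  have hnLm : (0:ℝ) < (n:ℝ)/L := by positivity
  have step3 : (m:ℝ) * ((n:ℝ)^(k'+1) / (k'+1).factorial) * (2/(m:ℝ))^(k'+1)
      ≤ (n:ℝ) * (2*L)^(k'+1) / ((k'+1).factorial : ℝ) := by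
    have e1 : (m:ℝ) * ((n:ℝ)^(k'+1) / (k'+1).factorial) * (2/(m:ℝ))^(k'+1)
        = ((n:ℝ)^(k'+1) * 2^(k'+1) / (m:ℝ)^k') / ((k'+1).factorial : ℝ) := by
      rw [div_pow]
      field_simp
      ring
    rw [e1]
    gcongr ?_ / _
    have hmk : ((n:ℝ)/L)^k' ≤ (m:ℝ)^k' := pow_le_pow_left₀ (le_of_lt hnLm) hm k'
    calc (n:ℝ)^(k'+1) * 2^(k'+1) / (m:ℝ)^k' ≤ (n:ℝ)^(k'+1) * 2^(k'+1) / ((n:ℝ)/L)^k' := by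
          gcongr
      _ = (n:ℝ) * 2^(k'+1) * L^k' := by
          rw [div_pow]
          field_simp
          ring
      _ ≤ (n:ℝ) * 2^(k'+1) * L^(k'+1) := by
          have hL1 : (1:ℝ) ≤ L := by linarith
          exact mul_le_mul_of_nonneg_left (pow_le_pow_right₀ hL1 (Nat.le_succ k'))
            (by positivity)
      _ = (n:ℝ) * (2*L)^(k'+1) := by rw [mul_pow]; ring
  set k := k' + 1
  have step4 : (n:ℝ) * (2*L)^k / ((k).factorial : ℝ) ≤ (n:ℝ) * (2*L)^k / (L^2/3)^k := by
    gcongr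
  have step5 : (n:ℝ) * (2*L)^k / (L^2/3)^k = (n:ℝ) * (6/L)^k := by
    rw [mul_div_assoc, ← div_pow]
    congr 2
    field_simp
    ring
  have step6 : (n:ℝ) * (6/L)^k ≤ (n:ℝ) * (1/2)^k := by
    have h6L : 6/L ≤ 1/2 := by
      rw [div_le_div_iff₀ hLpos (by norm_num : (0:ℝ) < 2)]; linarith
    exact mul_le_mul_of_nonneg_left (pow_le_pow_left₀ (by positivity) h6L k) (le_of_lt hn0)
  have step7 : (n:ℝ) * (1/2)^k ≤ 1/n :=
    step7_aux n k L hn0 hL0 hLpos hnL hk1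
  calc (m:ℝ) * (s.choose k : ℝ) * (q:ℝ)^k / (u.descFactorial k : ℝ)
      ≤ (m:ℝ) * ((n:ℝ)^k / (k.factorial : ℝ)) * (q:ℝ)^k / ((u:ℝ)/2)^k := step1
    _ = (m:ℝ) * ((n:ℝ)^k / (k.factorial : ℝ)) * (2/(m:ℝ))^k := step2
    _ ≤ (n:ℝ) * (2*L)^k / ((k).factorial : ℝ) := step3
    _ ≤ (n:ℝ) * (2*L)^k / (L^2/3)^k := step4
    _ = (n:ℝ) * (6/L)^k := step5
    _ ≤ (n:ℝ) * (1/2)^k := step6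
    _ ≤ 1/n := step7


/-- There exists `n₀` such that for all `n ≥ n₀`: let `u = m * q` with
`m ≥ n / log₂ n`, let `x₁, …, x_s` be distinct elements of `Fin u` with `s ≤ n`,
and let `π` be a uniformly random permutation of `Fin u` assigning `xᵢ` to bin
`⌊π xᵢ / q⌋ ∈ Fin m`.  Then with probability at least `1 − 1/n`, every bin
`β ∈ Fin m` is assigned at most `(log₂ n)²` of the elements `x₁, …, x_s`. -/
theorem max_bin_load :
    ∃ n₀ : ℕ, ∀ n : ℕ, n₀ ≤ n →
    ∀ (u m q s : ℕ), 0 < m → 0 < q → u = m * q →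
      (n : ℝ) / Real.logb 2 n ≤ m → s ≤ n →
    ∀ (x : Fin s → Fin u), Function.Injective x →
    (1 : ℝ) - 1 / n ≤
      ((Finset.univ.filter (fun π : Equiv.Perm (Fin u) =>
          ∀ β : Fin m,
            ((Finset.univ.filter
                (fun i : Fin s => (π (x i)).val / q = β.val)).card : ℝ)
              ≤ (Real.logb 2 n) ^ 2)).card : ℝ)
        / (Fintype.card (Equiv.Perm (Fin u)) : ℝ) := by
  classical
  refine ⟨2^8192, fun n hn u m q s hm0 hq hu hmn hs x hx => ?_⟩
  have hn0 : 0 < n := lt_of_lt_of_le (Nat.pow_pos (by norm_num)) hn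
  have hn0R : (0:ℝ) < n := by exact_mod_cast hn0
  have hnR : (2:ℝ)^(8192:ℕ) ≤ (n:ℝ) := by exact_mod_cast hn
  set L : ℝ := Real.logb 2 n with hLdef
  set k : ℕ := Nat.floor (L^2) + 1 with hkdef
  have hLsq : (0:ℝ) ≤ L^2 := sq_nonneg L
  have hk1 : L^2 < (k:ℝ) := by
    rw [hkdef]; push_cast; exact Nat.lt_floor_add_one _
  have hk2 : (k:ℝ) ≤ L^2 + 1 := by
    rw [hkdef]; push_cast
    have := Nat.floor_le hLsq
    linarith
  set P : Equiv.Perm (Fin u) → Prop := fun π =>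
    ∀ β : Fin m,
      ((Finset.univ.filter (fun i : Fin s => (π (x i)).val / q = β.val)).card : ℝ) ≤ L ^ 2
    with hP
  have htotal : (Fintype.card (Equiv.Perm (Fin u)) : ℝ) = (u.factorial : ℝ) := by
    rw [Fintype.card_perm, Fintype.card_fin]
  have htotpos : (0:ℝ) < (u.factorial : ℝ) := by positivity
  -- bad set bound
  have hbad_sub : (univ.filter fun π : Equiv.Perm (Fin u) => ¬ P π) ⊆
      (univ : Finset (Fin m)).biUnion (fun β =>
        univ.filter fun π : Equiv.Perm (Fin u) =>
          k ≤ (univ.filter fun i : Fin s => (π (x i)).val / q = β.val).card) := by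
    intro π hπ
    simp only [mem_filter, mem_univ, true_and, hP] at hπ
    push_neg at hπ
    obtain ⟨β, hβ⟩ := hπ
    simp only [Finset.mem_biUnion]
    refine ⟨β, mem_univ _, ?_⟩
    simp only [mem_filter, mem_univ, true_and]
    rw [hkdef]
    have := (Nat.floor_lt hLsq).2 hβ
    omega
  have hbad : (univ.filter fun π : Equiv.Perm (Fin u) => ¬ P π).card
      ≤ m * (s.choose k * (q ^ k * (u - k).factorial)) := by
    calc _ ≤ _ := Finset.card_le_card hbad_sub
      _ ≤ ∑ β ∈ (univ : Finset (Fin m)),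
          (univ.filter fun π : Equiv.Perm (Fin u) =>
            k ≤ (univ.filter fun i : Fin s => (π (x i)).val / q = β.val).card).card :=
        Finset.card_biUnion_le
      _ ≤ ∑ _β ∈ (univ : Finset (Fin m)), s.choose k * (q ^ k * (u - k).factorial) :=
        Finset.sum_le_sum (fun β _ => per_bin u m q s k hq hu x hx β)
      _ = m * (s.choose k * (q ^ k * (u - k).factorial)) := by
        rw [Finset.sum_const, Finset.card_univ, Fintype.card_fin, smul_eq_mul]
  have hnum : ((m:ℝ) * ((s.choose k : ℝ) * ((q:ℝ)^k * ((u-k).factorial : ℝ))))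
      / (u.factorial : ℝ) ≤ 1/n :=
    numeric n u m q s k L hLdef hnR hmn hq hu hs hk1 hk2
  have hsplit : (univ.filter fun π : Equiv.Perm (Fin u) => P π).card
      + (univ.filter fun π : Equiv.Perm (Fin u) => ¬ P π).card
      = Fintype.card (Equiv.Perm (Fin u)) := by
    rw [Finset.card_filter_add_card_filter_not, Finset.card_univ]
  have hbadR : ((univ.filter fun π : Equiv.Perm (Fin u) => ¬ P π).card : ℝ)
      / (u.factorial : ℝ) ≤ 1/n := by
    refine le_trans ?_ hnum
    gcongr
    exact_mod_cast hbad
  have hc : ((univ.filter fun π : Equiv.Perm (Fin u) => P π).card : ℝ)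
      + ((univ.filter fun π : Equiv.Perm (Fin u) => ¬ P π).card : ℝ)
      = (u.factorial : ℝ) := by
    rw [← htotal]
    exact_mod_cast congrArg (Nat.cast (R := ℝ)) hsplit
  have hgood : ((univ.filter fun π : Equiv.Perm (Fin u) => P π).card : ℝ)
      / (u.factorial : ℝ)
      = 1 - ((univ.filter fun π : Equiv.Perm (Fin u) => ¬ P π).card : ℝ)
        / (u.factorial : ℝ) := by
    field_simp
    linarith
  have hfinal : (1:ℝ) - 1/n ≤
      ((univ.filter fun π : Equiv.Perm (Fin u) => P π).card : ℝ) / (u.factorial : ℝ) := by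
    rw [hgood]
    linarith
  rw [htotal]
  exact hfinal
end

section
/- Let u = m·q for positive integers m and q, let x_1, …, x_s be distinct elements of Fin u with s ≤ n, set B = n/m, and let 0 < δ ≤ 1. Let π be a permutation of Fin u drawn uniformly at random, assigning element x_i to bin ⌊π(x_i)/q⌋ ∈ Fin m. Then for every fixed bin β ∈ Fin m, the probability that at least (1+δ)B of the elements x_1, …, x_s are assigned to bin β is at most exp(−δ²B/3). -/
open scoped Classical

lemma log_ge_mul_log2 (δ : ℝ) (h0 : 0 ≤ δ) (h1 : δ ≤ 1) :
    δ * Real.log 2 ≤ Real.log (1 + δ) := by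
  have hc := strictConcaveOn_log_Ioi.concaveOn
  have h := hc.2 (Set.mem_Ioi.2 one_pos) (Set.mem_Ioi.2 two_pos)
      (by linarith : (0:ℝ) ≤ 1 - δ) h0 (by ring)
  have : (1 - δ) • (1:ℝ) + δ • (2:ℝ) = 1 + δ := by simp; ring
  rw [this] at h
  simpa [Real.log_one] using h

lemma chernoff_exp_ineq (δ : ℝ) (h0 : 0 ≤ δ) (h1 : δ ≤ 1) :
    δ + δ ^ 2 / 3 ≤ (1 + δ) * Real.log (1 + δ) := by
  set f : ℝ → ℝ := fun y => (1 + y) * Real.log (1 + y) - y - y ^ 2 / 3 with hf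
  have key : ∀ y ∈ Set.Ioo (0:ℝ) 1, HasDerivAt f (Real.log (1 + y) - 2 * y / 3) y := by
    intro y hy
    have hy0 : (0:ℝ) < 1 + y := by linarith [hy.1]
    have h1' : HasDerivAt (fun z : ℝ => 1 + z) 1 y := (hasDerivAt_id y).const_add 1
    have h2 : HasDerivAt (fun z : ℝ => Real.log (1 + z)) (1 / (1 + y)) y := by
      simpa [Function.comp_def] using (Real.hasDerivAt_log hy0.ne').comp y h1'
    have h3 : HasDerivAt (fun z : ℝ => (1 + z) * Real.log (1 + z))
        (1 * Real.log (1 + y) + (1 + y) * (1 / (1 + y))) y := h1'.mul h2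
    have h4 : HasDerivAt (fun z : ℝ => z + z ^ 2 / 3) (1 + 2 * y / 3) y := by
      have := ((hasDerivAt_pow 2 y).div_const 3).const_add 0
      have h5 : HasDerivAt (fun z : ℝ => z ^ 2 / 3) (2 * y / 3) y := by
        simpa [mul_comm] using (hasDerivAt_pow 2 y).div_const 3
      simpa [Pi.add_def] using (hasDerivAt_id y).add h5
    have := h3.sub h4
    have heq : 1 * Real.log (1 + y) + (1 + y) * (1 / (1 + y)) - (1 + 2 * y / 3)
        = Real.log (1 + y) - 2 * y / 3 := by
      field_simp
      ring
    rw [heq] at this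
    simpa [hf, sub_sub, Pi.sub_def] using this
  have hmono : MonotoneOn f (Set.Icc (0:ℝ) 1) := by
    apply monotoneOn_of_deriv_nonneg (convex_Icc 0 1)
    · apply ContinuousOn.sub
      apply ContinuousOn.sub
      · exact (continuousOn_const.add continuousOn_id).mul
          ((continuousOn_const.add continuousOn_id).log (fun z hz => by
            have := hz.1; dsimp; linarith))
      · exact continuousOn_id
      · exact (continuousOn_pow 2).div_const 3
    · intro y hy
      rw [interior_Icc] at hy
      exact (key y hy).differentiableAt.differentiableWithinAt
    · intro y hy
      rw [interior_Icc] at hy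
      rw [(key y hy).deriv]
      have hl := log_ge_mul_log2 y hy.1.le hy.2.le
      have hlog2 : (0.6931471803 : ℝ) < Real.log 2 := Real.log_two_gt_d9
      nlinarith [hy.1.le]
  rcases eq_or_lt_of_le h0 with rfl | hpos
  · simp
  · have := hmono (Set.mem_Icc.2 ⟨le_refl 0, zero_le_one⟩) (Set.mem_Icc.2 ⟨h0, h1⟩) h0
    simp only [hf] at this
    simp at this
    nlinarith [this]

noncomputable def gSwap (q β : ℕ) (r : ℕ → Option ℕ) (v : ℕ) : ℕ :=
  match r (v % q) with
  | none => v
  | some c =>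
    if v / q = β then c * q + v % q
    else if v / q = c then β * q + v % q
    else v

lemma divmod_pair (q c t : ℕ) (hq : 0 < q) (ht : t < q) :
    (c * q + t) / q = c ∧ (c * q + t) % q = t := by
  constructor
  · rw [add_comm, Nat.add_mul_div_right _ _ hq, Nat.div_eq_of_lt ht, zero_add]
  · rw [add_comm, Nat.add_mul_mod_self_right, Nat.mod_eq_of_lt ht]

lemma gSwap_none (q β : ℕ) (r : ℕ → Option ℕ) (v : ℕ) (h : r (v % q) = none) :
    gSwap q β r v = v := by unfold gSwap; simp [h]

lemma gSwap_some_beta (q β c : ℕ) (r : ℕ → Option ℕ) (v : ℕ)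
    (h : r (v % q) = some c) (hβ : v / q = β) :
    gSwap q β r v = c * q + v % q := by unfold gSwap; simp [h, hβ]

lemma gSwap_some_c (q β c : ℕ) (r : ℕ → Option ℕ) (v : ℕ)
    (h : r (v % q) = some c) (hβ : v / q ≠ β) (hc : v / q = c) :
    gSwap q β r v = β * q + v % q := by
  unfold gSwap; simp only [h]; rw [if_neg hβ, if_pos hc]

lemma gSwap_some_other (q β c : ℕ) (r : ℕ → Option ℕ) (v : ℕ)
    (h : r (v % q) = some c) (hβ : v / q ≠ β) (hc : v / q ≠ c) :
    gSwap q β r v = v := by unfold gSwap; simp [h, hβ, hc]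

lemma gSwap_lt (m q β : ℕ) (hq : 0 < q) (hβ : β < m) (r : ℕ → Option ℕ)
    (hr : ∀ t c, r t = some c → c < m) (v : ℕ) (hv : v < m * q) :
    gSwap q β r v < m * q := by
  have ht : v % q < q := Nat.mod_lt _ hq
  rcases h : r (v % q) with _ | c
  · rw [gSwap_none _ _ _ _ h]; exact hv
  · have hc : c < m := hr _ _ h
    have b1 : c * q + v % q < m * q := by
      calc c * q + v % q < c * q + q := by omega
        _ = (c + 1) * q := by ring
        _ ≤ m * q := Nat.mul_le_mul_right q hc
    have b2 : β * q + v % q < m * q := by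
      calc β * q + v % q < β * q + q := by omega
        _ = (β + 1) * q := by ring
        _ ≤ m * q := Nat.mul_le_mul_right q hβ
    by_cases h1 : v / q = β
    · rw [gSwap_some_beta _ _ _ _ _ h h1]; exact b1
    · by_cases h2 : v / q = c
      · rw [gSwap_some_c _ _ _ _ _ h h1 h2]; exact b2
      · rw [gSwap_some_other _ _ _ _ _ h h1 h2]; exact hv

lemma gSwap_invol (q β : ℕ) (hq : 0 < q) (r : ℕ → Option ℕ) (v : ℕ) :
    gSwap q β r (gSwap q β r v) = v := by
  have ht : v % q < q := Nat.mod_lt _ hq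
  have hvd : v / q * q + v % q = v := Nat.div_add_mod' v q
  rcases h : r (v % q) with _ | c
  · rw [gSwap_none _ _ _ _ h, gSwap_none _ _ _ _ h]
  · by_cases h1 : v / q = β
    · rw [gSwap_some_beta _ _ _ _ _ h h1]
      obtain ⟨e1, e2⟩ := divmod_pair q c (v % q) hq ht
      have h' : r ((c * q + v % q) % q) = some c := by rw [e2]; exact h
      by_cases h3 : c = β
      · rw [gSwap_some_beta _ _ _ _ _ h' (by rw [e1]; exact h3), e2, h3, ← h1]
        exact Nat.div_add_mod' v q
      · rw [gSwap_some_c _ _ _ _ _ h' (by rw [e1]; exact h3) e1, e2, ← h1]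
        exact Nat.div_add_mod' v q
    · by_cases h2 : v / q = c
      · rw [gSwap_some_c _ _ _ _ _ h h1 h2]
        obtain ⟨e1, e2⟩ := divmod_pair q β (v % q) hq ht
        have h' : r ((β * q + v % q) % q) = some c := by rw [e2]; exact h
        rw [gSwap_some_beta _ _ _ _ _ h' e1, e2, ← h2]
        exact Nat.div_add_mod' v q
      · rw [gSwap_some_other _ _ _ _ _ h h1 h2, gSwap_some_other _ _ _ _ _ h h1 h2]

noncomputable def permSwap (m q β : ℕ) (hq : 0 < q) (hβ : β < m) (r : ℕ → Option ℕ)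
    (hr : ∀ t c, r t = some c → c < m) : Equiv.Perm (Fin (m * q)) :=
  Function.Involutive.toPerm
    (fun v => ⟨gSwap q β r v.1, gSwap_lt m q β hq hβ r hr v.1 v.2⟩)
    (fun v => Fin.ext (gSwap_invol q β hq r v.1))

lemma permSwap_apply (m q β : ℕ) (hq : 0 < q) (hβ : β < m) (r : ℕ → Option ℕ)
    (hr : ∀ t c, r t = some c → c < m) (v : Fin (m * q)) :
    (permSwap m q β hq hβ r hr v).1 = gSwap q β r v.1 := rfl

noncomputable def rFun {m q s : ℕ} (T : Finset (Fin s)) (x : Fin s → Fin (m * q))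
    (π : Equiv.Perm (Fin (m * q))) (f : ↥T → Fin m) : ℕ → Option ℕ :=
  fun t => if h : ∃ i : ↥T, (π (x i.1)).val % q = t then some (f h.choose).1 else none

lemma rFun_lt {m q s : ℕ} (T : Finset (Fin s)) (x : Fin s → Fin (m * q))
    (π : Equiv.Perm (Fin (m * q))) (f : ↥T → Fin m) :
    ∀ t c, rFun T x π f t = some c → c < m := by
  intro t c h
  unfold rFun at h
  split at h
  · exact (Option.some_inj.mp h) ▸ (f _).2
  · exact absurd h (by simp)

lemma count_perm_bound (m q : ℕ) (hq : 0 < q)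
    (s : ℕ) (x : Fin s → Fin (m * q)) (hx : Function.Injective x)
    (β : Fin m) (T : Finset (Fin s)) :
    (Finset.univ.filter (fun π : Equiv.Perm (Fin (m * q)) =>
        ∀ i ∈ T, (π (x i)).val / q = β.val)).card * m ^ T.card
      ≤ Fintype.card (Equiv.Perm (Fin (m * q))) := by
  classical
  set A := Finset.univ.filter (fun π : Equiv.Perm (Fin (m * q)) =>
      ∀ i ∈ T, (π (x i)).val / q = β.val) with hA
  -- uniqueness of the witness
  have uniq : ∀ π : Equiv.Perm (Fin (m * q)),
      (∀ i ∈ T, (π (x i)).val / q = β.val) →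
      ∀ j k : ↥T, (π (x j.1)).val % q = (π (x k.1)).val % q → j = k := by
    intro π hπ j k hjk
    have hj := hπ j.1 j.2
    have hk := hπ k.1 k.2
    have dj := Nat.div_add_mod' (π (x j.1)).val q
    have dk := Nat.div_add_mod' (π (x k.1)).val q
    rw [hj] at dj; rw [hk] at dk
    have hval : (π (x j.1)).val = (π (x k.1)).val := by omega
    exact Subtype.ext (hx (π.injective (Fin.ext hval)))
  -- the injection
  set Φ : Equiv.Perm (Fin (m * q)) × (↥T → Fin m) → Equiv.Perm (Fin (m * q)) :=
    fun p => p.1.trans (permSwap m q β.1 hq β.2 (rFun T x p.1 p.2) (rFun_lt T x p.1 p.2))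
    with hΦdef
  have eval : ∀ π : Equiv.Perm (Fin (m * q)),
      (∀ i ∈ T, (π (x i)).val / q = β.val) → ∀ (f : ↥T → Fin m) (i : ↥T),
      ((Φ (π, f)) (x i.1)).val = (f i).1 * q + (π (x i.1)).val % q := by
    intro π hπ f i
    have hbin : (π (x i.1)).val / q = β.val := hπ i.1 i.2
    have hex : ∃ j : ↥T, (π (x j.1)).val % q = (π (x i.1)).val % q := ⟨i, rfl⟩
    have hch : hex.choose = i := uniq π hπ hex.choose i hex.choose_spec
    have hr_eval : rFun T x π f ((π (x i.1)).val % q) = some (f i).1 := by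
      unfold rFun
      rw [dif_pos hex, hch]
    show gSwap q β.1 (rFun T x π f) (π (x i.1)).val = _
    rw [gSwap_some_beta _ _ _ _ _ hr_eval hbin]
  -- counting
  have hcardfun : (Finset.univ : Finset (↥T → Fin m)).card = m ^ T.card := by
    simp [Fintype.card_fun]
  calc A.card * m ^ T.card = (A ×ˢ (Finset.univ : Finset (↥T → Fin m))).card := by
        rw [Finset.card_product, hcardfun]
    _ ≤ (Finset.univ : Finset (Equiv.Perm (Fin (m * q)))).card := by
        apply Finset.card_le_card_of_injOn Φ (fun _ _ => Finset.mem_univ _)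
        rintro ⟨π₁, f₁⟩ hp1 ⟨π₂, f₂⟩ hp2 heq
        have hπ₁ : ∀ i ∈ T, (π₁ (x i)).val / q = β.val :=
          (Finset.mem_filter.mp (Finset.mem_product.mp hp1).1).2
        have hπ₂ : ∀ i ∈ T, (π₂ (x i)).val / q = β.val :=
          (Finset.mem_filter.mp (Finset.mem_product.mp hp2).1).2
        have hkey : ∀ i : ↥T, (f₁ i) = (f₂ i) ∧
            (π₁ (x i.1)).val % q = (π₂ (x i.1)).val % q := by
          intro i
          have e1 := eval π₁ hπ₁ f₁ i
          have e2 := eval π₂ hπ₂ f₂ i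
          rw [heq] at e1
          have h12 : (f₁ i).1 * q + (π₁ (x i.1)).val % q
              = (f₂ i).1 * q + (π₂ (x i.1)).val % q := by rw [← e1, ← e2]
          have ht1 : (π₁ (x i.1)).val % q < q := Nat.mod_lt _ hq
          have ht2 : (π₂ (x i.1)).val % q < q := Nat.mod_lt _ hq
          have d1 := (divmod_pair q (f₁ i).1 ((π₁ (x i.1)).val % q) hq ht1).1
          have d2 := (divmod_pair q (f₂ i).1 ((π₂ (x i.1)).val % q) hq ht2).1
          rw [h12] at d1
          rw [d2] at d1
          constructor
          · exact Fin.ext d1.symm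
          · rw [← d1] at h12; omega
        have hf : f₁ = f₂ := funext fun i => (hkey i).1
        have hrf : rFun T x π₁ f₁ = rFun T x π₂ f₂ := by
          funext t
          unfold rFun
          by_cases h1 : ∃ j : ↥T, (π₁ (x j.1)).val % q = t
          · have h2 : ∃ j : ↥T, (π₂ (x j.1)).val % q = t :=
              ⟨h1.choose, by rw [← (hkey h1.choose).2]; exact h1.choose_spec⟩
            rw [dif_pos h1, dif_pos h2]
            have hj : h1.choose = h2.choose := by
              apply uniq π₁ hπ₁
              rw [h1.choose_spec, (hkey h2.choose).2, h2.choose_spec]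
            rw [hj, hf]
          · have h2 : ¬ ∃ j : ↥T, (π₂ (x j.1)).val % q = t := by
              rintro ⟨j, hj⟩
              exact h1 ⟨j, by rw [(hkey j).2]; exact hj⟩
            rw [dif_neg h1, dif_neg h2]
        have hσ : permSwap m q β.1 hq β.2 (rFun T x π₁ f₁) (rFun_lt T x π₁ f₁)
            = permSwap m q β.1 hq β.2 (rFun T x π₂ f₂) (rFun_lt T x π₂ f₂) := by
          congr 1
        have hπeq : π₁ = π₂ := by
          have h' : Φ (π₁, f₁) = Φ (π₂, f₂) := heq
          simp only [hΦdef, hσ] at h'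
          have := congrArg (fun e => e.trans (permSwap m q β.1 hq β.2
            (rFun T x π₂ f₂) (rFun_lt T x π₂ f₂)).symm) h'
          simpa [Equiv.trans_assoc] using this
        exact Prod.ext hπeq hf
    _ = Fintype.card (Equiv.Perm (Fin (m * q))) := Finset.card_univ

lemma pow_card_eq_sum_powerset {ι : Type*} (H : Finset ι) (r : ℝ) :
    (r + 1) ^ H.card = ∑ T ∈ H.powerset, r ^ T.card := by
  classical
  rw [← Finset.prod_const, Finset.prod_add]
  apply Finset.sum_congr rfl
  intro T hT
  simp [Finset.prod_const]

/-- Let `u = m * q`, let `x₁, …, x_s` be distinct elements of `Fin u` with `s ≤ n`,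
set `B = n/m`, and let `0 < δ ≤ 1`.  For a uniformly random permutation `π` of
`Fin u` assigning `xᵢ` to bin `⌊π xᵢ / q⌋ ∈ Fin m`, the probability that at least
`(1+δ)B` of the elements `x₁, …, x_s` are assigned to a fixed bin `β ∈ Fin m` is
at most `exp(−δ²B/3)`. -/
theorem full_bin_dictionary_prob
    (u m q s n : ℕ) (hm : 0 < m) (hq : 0 < q) (hu : u = m * q) (hs : s ≤ n)
    (x : Fin s → Fin u) (hx : Function.Injective x)
    (B : ℝ) (hB : B = (n : ℝ) / m)
    (δ : ℝ) (hδ0 : 0 < δ) (hδ1 : δ ≤ 1)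
    (β : Fin m) :
    ((Finset.univ.filter (fun π : Equiv.Perm (Fin u) =>
        (1 + δ) * B ≤
          ((Finset.univ.filter
              (fun i : Fin s => (π (x i)).val / q = β.val)).card : ℝ))).card : ℝ)
      / (Fintype.card (Equiv.Perm (Fin u)) : ℝ)
      ≤ Real.exp (-(δ ^ 2 * B / 3)) := by
  subst hu
  have hB0 : 0 ≤ B := by
    rw [hB]; positivity
  set count : Equiv.Perm (Fin (m * q)) → ℕ := fun π =>
    (Finset.univ.filter (fun i : Fin s => (π (x i)).val / q = β.val)).card with hcount
  set U : ℕ := Fintype.card (Equiv.Perm (Fin (m * q))) with hUdef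
  have hU : 0 < U := Fintype.card_pos
  have hδn : (0:ℝ) ≤ δ := hδ0.le
  -- Step 1: expansion of (1+δ)^count
  have expand : ∀ π : Equiv.Perm (Fin (m * q)),
      ((1:ℝ) + δ) ^ (count π) =
        ∑ T ∈ (Finset.univ : Finset (Fin s)).powerset,
          (if ∀ i ∈ T, (π (x i)).val / q = β.val then δ ^ T.card else 0) := by
    intro π
    have h1 : ((1:ℝ) + δ) ^ (count π) = (δ + 1) ^ (count π) := by ring_nf
    rw [h1, hcount, pow_card_eq_sum_powerset, ← Finset.sum_filter]
    apply Finset.sum_congr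
    · ext T
      simp only [Finset.mem_powerset, Finset.mem_filter, Finset.mem_univ, true_and]
      constructor
      · intro h
        exact ⟨fun i _ => Finset.mem_univ i, fun i hi => (Finset.mem_filter.mp (h hi)).2⟩
      · intro h i hi
        exact Finset.mem_filter.mpr ⟨Finset.mem_univ i, h.2 i hi⟩
    · intros; rfl
  -- Step 2: sum over all permutations
  have main_sum : ∑ π : Equiv.Perm (Fin (m * q)), ((1:ℝ) + δ) ^ (count π)
      = ∑ T ∈ (Finset.univ : Finset (Fin s)).powerset,
          δ ^ T.card * ((Finset.univ.filter (fun π : Equiv.Perm (Fin (m * q)) =>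
              ∀ i ∈ T, (π (x i)).val / q = β.val)).card : ℝ) := by
    simp_rw [expand]
    rw [Finset.sum_comm]
    apply Finset.sum_congr rfl
    intro T _
    rw [← Finset.sum_filter, Finset.sum_const, nsmul_eq_mul, mul_comm]
  -- Step 3: bound each term
  have term_bound : ∀ T : Finset (Fin s),
      δ ^ T.card * ((Finset.univ.filter (fun π : Equiv.Perm (Fin (m * q)) =>
          ∀ i ∈ T, (π (x i)).val / q = β.val)).card : ℝ)
        ≤ (U : ℝ) * (δ / m) ^ T.card := by
    intro T
    have hN := count_perm_bound m q hq s x hx β T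
    have hNR : ((Finset.univ.filter (fun π : Equiv.Perm (Fin (m * q)) =>
        ∀ i ∈ T, (π (x i)).val / q = β.val)).card : ℝ) * (m : ℝ) ^ T.card ≤ (U : ℝ) := by
      rw [← Nat.cast_pow, ← Nat.cast_mul]
      exact_mod_cast hN
    have hmpos : (0:ℝ) < (m : ℝ) ^ T.card := by positivity
    have hδpow : (0:ℝ) ≤ δ ^ T.card := by positivity
    rw [div_pow]
    calc δ ^ T.card * ((Finset.univ.filter (fun π : Equiv.Perm (Fin (m * q)) =>
            ∀ i ∈ T, (π (x i)).val / q = β.val)).card : ℝ)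
        ≤ δ ^ T.card * ((U : ℝ) / (m : ℝ) ^ T.card) := by
          apply mul_le_mul_of_nonneg_left _ hδpow
          rw [le_div_iff₀ hmpos]
          exact hNR
      _ = (U : ℝ) * (δ ^ T.card / (m : ℝ) ^ T.card) := by ring
  -- Step 4: geometric sum
  have geom : ∑ T ∈ (Finset.univ : Finset (Fin s)).powerset,
      (U : ℝ) * (δ / m) ^ T.card = (U : ℝ) * (δ / m + 1) ^ s := by
    rw [← Finset.mul_sum, ← pow_card_eq_sum_powerset, Finset.card_univ, Fintype.card_fin]
  -- Step 5: upper bound the sum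
  have upper : ∑ π : Equiv.Perm (Fin (m * q)), ((1:ℝ) + δ) ^ (count π)
      ≤ (U : ℝ) * Real.exp (δ * B) := by
    rw [main_sum]
    calc ∑ T ∈ (Finset.univ : Finset (Fin s)).powerset,
          δ ^ T.card * ((Finset.univ.filter (fun π : Equiv.Perm (Fin (m * q)) =>
              ∀ i ∈ T, (π (x i)).val / q = β.val)).card : ℝ)
        ≤ ∑ T ∈ (Finset.univ : Finset (Fin s)).powerset, (U : ℝ) * (δ / m) ^ T.card :=
          Finset.sum_le_sum (fun T _ => term_bound T)
      _ = (U : ℝ) * (δ / m + 1) ^ s := geom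
      _ ≤ (U : ℝ) * Real.exp (δ * B) := by
          apply mul_le_mul_of_nonneg_left _ (Nat.cast_nonneg U)
          have h1 : δ / m + 1 ≤ Real.exp (δ / m) := by
            have := Real.add_one_le_exp (δ / m)
            linarith
          have h0 : (0:ℝ) ≤ δ / m + 1 := by positivity
          calc (δ / m + 1) ^ s ≤ Real.exp (δ / m) ^ s := pow_le_pow_left₀ h0 h1 s
            _ = Real.exp (s * (δ / m)) := by rw [← Real.exp_nat_mul]
            _ ≤ Real.exp (δ * B) := by
                apply Real.exp_le_exp.mpr
                rw [hB]
                have hsn : (s : ℝ) ≤ (n : ℝ) := Nat.cast_le.mpr hs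
                have hm0 : (0:ℝ) < (m : ℝ) := Nat.cast_pos.mpr hm
                have h2 : (s:ℝ) * (δ / m) = δ * s / m := by ring
                have h3 : δ * ((n:ℝ) / m) = δ * n / m := by ring
                rw [h2, h3]
                gcongr
  -- Step 6: lower bound
  have hb1 : (0:ℝ) < 1 + δ := by linarith
  have hlog : 0 ≤ Real.log (1 + δ) := Real.log_nonneg (by linarith)
  set E : ℝ := Real.exp ((1 + δ) * B * Real.log (1 + δ)) with hE
  have hEpos : 0 < E := Real.exp_pos _
  set FK := Finset.univ.filter (fun π : Equiv.Perm (Fin (m * q)) =>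
      (1 + δ) * B ≤
        ((Finset.univ.filter
            (fun i : Fin s => (π (x i)).val / q = β.val)).card : ℝ)) with hFK
  have lower : (FK.card : ℝ) * E
      ≤ ∑ π : Equiv.Perm (Fin (m * q)), ((1:ℝ) + δ) ^ (count π) := by
    have step1 : ∀ π ∈ FK, E ≤ ((1:ℝ) + δ) ^ (count π) := by
      intro π hπ
      have hc : (1 + δ) * B ≤ ((count π : ℕ) : ℝ) := (Finset.mem_filter.mp hπ).2
      rw [hE, ← Real.rpow_natCast (1 + δ) (count π), Real.rpow_def_of_pos hb1]
      apply Real.exp_le_exp.mpr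
      calc (1 + δ) * B * Real.log (1 + δ) ≤ ((count π : ℕ) : ℝ) * Real.log (1 + δ) :=
            mul_le_mul_of_nonneg_right hc hlog
        _ = Real.log (1 + δ) * ((count π : ℕ) : ℝ) := mul_comm _ _
    calc (FK.card : ℝ) * E = ∑ _π ∈ FK, E := by rw [Finset.sum_const, nsmul_eq_mul]
      _ ≤ ∑ π ∈ FK, ((1:ℝ) + δ) ^ (count π) := Finset.sum_le_sum step1
      _ ≤ ∑ π : Equiv.Perm (Fin (m * q)), ((1:ℝ) + δ) ^ (count π) :=
          Finset.sum_le_sum_of_subset_of_nonneg (Finset.filter_subset _ _)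
            (fun π _ _ => pow_nonneg (by linarith) _)
  -- Step 7: combine
  have combined : (FK.card : ℝ) * E ≤ (U : ℝ) * Real.exp (δ * B) := lower.trans upper
  have key2 : (U : ℝ) * Real.exp (δ * B) ≤ (Real.exp (-(δ ^ 2 * B / 3)) * U) * E := by
    rw [hE, mul_comm (Real.exp (-(δ ^ 2 * B / 3))) (U : ℝ), mul_assoc, ← Real.exp_add]
    apply mul_le_mul_of_nonneg_left _ (Nat.cast_nonneg U)
    apply Real.exp_le_exp.mpr
    have hcore := chernoff_exp_ineq δ hδn hδ1
    nlinarith [mul_le_mul_of_nonneg_left hcore hB0]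
  have final : (FK.card : ℝ) ≤ Real.exp (-(δ ^ 2 * B / 3)) * U :=
    le_of_mul_le_mul_right (combined.trans key2) hEpos
  rw [div_le_iff₀ (by exact_mod_cast hU : (0:ℝ) < (U : ℝ))]
  exact final
end
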